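/- arXiv:1311.4025 — 4 statements merged into one kernel-verified Lean document; each statement's English description precedes it below -/
import Mathlib

section
/- Let f : Fin M → ℝ^N be a finite family of vectors and let Mod : ℝ^N → ℝ^M be the phaseless measurement map Mod(x) = (|⟨x, f_i⟩|)_{i=1}^M. Then for all x, x' ∈ ℝ^N, A_F · d(x,x') ≤ ‖Mod(x) − Mod(x')‖₂ ≤ B_F · d(x,x'), where A_F = min over all subsets Ω ⊆ Fin M of sqrt(λ₋(F_Ω)² + λ₋(F_{Ωᶜ})²) and B_F = λ₊(F). -/
open scoped BigOperators RealInnerProductSpace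
open Finset

noncomputable section

/-- Lower frame bound of the subfamily of `g` indexed by `Ω`: the largest `c ≥ 0` such that
`c·‖x‖ ≤ (∑_{i∈Ω} ⟨x, g i⟩²)^{1/2}` for all `x`. -/
def lowerFrameBound {N : ℕ} {ι : Type*} (g : ι → EuclideanSpace ℝ (Fin N))
    (Ω : Finset ι) : ℝ :=
  sSup {c : ℝ | 0 ≤ c ∧ ∀ x : EuclideanSpace ℝ (Fin N),
    c * ‖x‖ ≤ Real.sqrt (∑ i ∈ Ω, ⟪x, g i⟫ ^ 2)}

/-- Upper frame bound of the family `g`: the smallest `C ≥ 0` such that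
`(∑_i ⟨x, g i⟩²)^{1/2} ≤ C·‖x‖` for all `x`. -/
def upperFrameBound {N : ℕ} {ι : Type*} [Fintype ι] (g : ι → EuclideanSpace ℝ (Fin N)) : ℝ :=
  sInf {C : ℝ | 0 ≤ C ∧ ∀ x : EuclideanSpace ℝ (Fin N),
    Real.sqrt (∑ i, ⟪x, g i⟫ ^ 2) ≤ C * ‖x‖}

/-- Sign-invariant distance `d(x,x') = min(‖x−x'‖, ‖x+x'‖)`. -/
def sdist {N : ℕ} (x x' : EuclideanSpace ℝ (Fin N)) : ℝ :=
  min ‖x - x'‖ ‖x + x'‖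

lemma lfb_nonneg {N : ℕ} {ι : Type*} (g : ι → EuclideanSpace ℝ (Fin N)) (Ω : Finset ι) :
    0 ≤ lowerFrameBound g Ω :=
  Real.sSup_nonneg (fun _ hx => hx.1)

lemma lfb_le {N : ℕ} {ι : Type*} (g : ι → EuclideanSpace ℝ (Fin N)) (Ω : Finset ι)
    (y : EuclideanSpace ℝ (Fin N)) :
    lowerFrameBound g Ω * ‖y‖ ≤ Real.sqrt (∑ i ∈ Ω, ⟪y, g i⟫ ^ 2) := by
  rcases eq_or_lt_of_le (norm_nonneg y) with h | h
  · rw [← h, mul_zero]; exact Real.sqrt_nonneg _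
  · have hb : lowerFrameBound g Ω ≤ Real.sqrt (∑ i ∈ Ω, ⟪y, g i⟫ ^ 2) / ‖y‖ := by
      unfold lowerFrameBound
      apply csSup_le
      · exact ⟨0, le_refl (0:ℝ), fun x => by rw [zero_mul]; exact Real.sqrt_nonneg _⟩
      intro c hc
      rw [le_div_iff₀ h]
      exact hc.2 y
    calc lowerFrameBound g Ω * ‖y‖ ≤ (Real.sqrt (∑ i ∈ Ω, ⟪y, g i⟫ ^ 2) / ‖y‖) * ‖y‖ :=
          mul_le_mul_of_nonneg_right hb (norm_nonneg y)
      _ = Real.sqrt (∑ i ∈ Ω, ⟪y, g i⟫ ^ 2) := div_mul_cancel₀ _ (ne_of_gt h)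

lemma ufb_nonneg {N M : ℕ} (f : Fin M → EuclideanSpace ℝ (Fin N)) :
    0 ≤ upperFrameBound f :=
  Real.sInf_nonneg (fun _ hx => hx.1)

lemma ufb_mem_nonempty {N M : ℕ} (f : Fin M → EuclideanSpace ℝ (Fin N)) :
    Set.Nonempty {C : ℝ | 0 ≤ C ∧ ∀ x : EuclideanSpace ℝ (Fin N),
      Real.sqrt (∑ i, ⟪x, f i⟫ ^ 2) ≤ C * ‖x‖} := by
  refine ⟨Real.sqrt (∑ i, ‖f i‖ ^ 2), Real.sqrt_nonneg _, fun x => ?_⟩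
  have h1 : ∑ i, ⟪x, f i⟫ ^ 2 ≤ ∑ i, ‖x‖ ^ 2 * ‖f i‖ ^ 2 := by
    apply Finset.sum_le_sum
    intro i _
    have := abs_real_inner_le_norm x (f i)
    nlinarith [abs_nonneg ⟪x, f i⟫, sq_abs ⟪x, f i⟫]
  calc Real.sqrt (∑ i, ⟪x, f i⟫ ^ 2) ≤ Real.sqrt (∑ i, ‖x‖ ^ 2 * ‖f i‖ ^ 2) :=
        Real.sqrt_le_sqrt h1
    _ = Real.sqrt (‖x‖ ^ 2 * ∑ i, ‖f i‖ ^ 2) := by rw [← Finset.mul_sum]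
    _ = ‖x‖ * Real.sqrt (∑ i, ‖f i‖ ^ 2) := by
        rw [Real.sqrt_mul (by positivity), Real.sqrt_sq (norm_nonneg x)]
    _ = Real.sqrt (∑ i, ‖f i‖ ^ 2) * ‖x‖ := mul_comm _ _

lemma ufb_ge {N M : ℕ} (f : Fin M → EuclideanSpace ℝ (Fin N))
    (y : EuclideanSpace ℝ (Fin N)) :
    Real.sqrt (∑ i, ⟪y, f i⟫ ^ 2) ≤ upperFrameBound f * ‖y‖ := by
  rcases eq_or_lt_of_le (norm_nonneg y) with h | h
  · have hy : y = 0 := by simpa using h.symm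
    simp [hy, ← h]
  · have hb : Real.sqrt (∑ i, ⟪y, f i⟫ ^ 2) / ‖y‖ ≤ upperFrameBound f := by
      apply le_csInf (ufb_mem_nonempty f)
      intro C hC
      rw [div_le_iff₀ h]
      exact hC.2 y
    calc Real.sqrt (∑ i, ⟪y, f i⟫ ^ 2)
        = (Real.sqrt (∑ i, ⟪y, f i⟫ ^ 2) / ‖y‖) * ‖y‖ := (div_mul_cancel₀ _ (ne_of_gt h)).symm
      _ ≤ upperFrameBound f * ‖y‖ := mul_le_mul_of_nonneg_right hb (norm_nonneg y)

lemma key_min (a b : ℝ) : (|a| - |b|) ^ 2 = min ((a - b) ^ 2) ((a + b) ^ 2) := by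
  have h1 : (|a| - |b|) ^ 2 = a ^ 2 + b ^ 2 - 2 * |a * b| := by
    rw [sub_sq, sq_abs, sq_abs, mul_assoc, ← abs_mul]; ring
  rcases abs_cases (a * b) with ⟨h2, h3⟩ | ⟨h2, h3⟩
  · rw [min_eq_left (by nlinarith), h1, h2]; ring
  · rw [min_eq_right (by nlinarith), h1, h2]; ring

/-- bi-Lipschitz bounds for the phaseless map `x ↦ (|⟨x, f_i⟩|)_i`. -/
theorem phaseless_biLipschitz {N M : ℕ} (f : Fin M → EuclideanSpace ℝ (Fin N)) :
    ∀ x x' : EuclideanSpace ℝ (Fin N),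
      (⨅ Ω : Finset (Fin M),
          Real.sqrt (lowerFrameBound f Ω ^ 2 + lowerFrameBound f Ωᶜ ^ 2)) * sdist x x'
        ≤ Real.sqrt (∑ i, (|⟪x, f i⟫| - |⟪x', f i⟫|) ^ 2) ∧
      Real.sqrt (∑ i, (|⟪x, f i⟫| - |⟪x', f i⟫|) ^ 2)
        ≤ upperFrameBound f * sdist x x' := by
  intro x x'
  classical
  have hdnn : 0 ≤ sdist x x' := le_min (norm_nonneg _) (norm_nonneg _)
  have hsub : ∀ i, ⟪x - x', f i⟫ = ⟪x, f i⟫ - ⟪x', f i⟫ := fun i => inner_sub_left _ _ _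
  have hadd : ∀ i, ⟪x + x', f i⟫ = ⟪x, f i⟫ + ⟪x', f i⟫ := fun i => inner_add_left _ _ _
  have hd1 : sdist x x' ≤ ‖x - x'‖ := min_le_left _ _
  have hd2 : sdist x x' ≤ ‖x + x'‖ := min_le_right _ _
  constructor
  · -- lower bound
    set P : Fin M → Prop :=
      fun i => (⟪x, f i⟫ - ⟪x', f i⟫) ^ 2 ≤ (⟪x, f i⟫ + ⟪x', f i⟫) ^ 2 with hP
    set Ω : Finset (Fin M) := Finset.univ.filter P with hΩ
    have hΩc : Ωᶜ = Finset.univ.filter (fun i => ¬ P i) := by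
      rw [hΩ, Finset.compl_filter]
    have hsplit : ∑ i, (|⟪x, f i⟫| - |⟪x', f i⟫|) ^ 2
        = ∑ i ∈ Ω, ⟪x - x', f i⟫ ^ 2 + ∑ i ∈ Ωᶜ, ⟪x + x', f i⟫ ^ 2 := by
      rw [hΩc, hΩ,
        ← Finset.sum_filter_add_sum_filter_not Finset.univ P
          (fun i => (|⟪x, f i⟫| - |⟪x', f i⟫|) ^ 2)]
      congr 1
      · refine Finset.sum_congr rfl fun i hi => ?_
        have hpi : P i := (Finset.mem_filter.mp hi).2
        rw [key_min, hsub i, min_eq_left hpi]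
      · refine Finset.sum_congr rfl fun i hi => ?_
        have hpi : ¬ P i := (Finset.mem_filter.mp hi).2
        rw [key_min, hadd i, min_eq_right (le_of_not_ge hpi)]
    have h1 : lowerFrameBound f Ω ^ 2 * ‖x - x'‖ ^ 2 ≤ ∑ i ∈ Ω, ⟪x - x', f i⟫ ^ 2 := by
      have ht := lfb_le f Ω (x - x')
      have hnn : 0 ≤ lowerFrameBound f Ω * ‖x - x'‖ :=
        mul_nonneg (lfb_nonneg f Ω) (norm_nonneg _)
      nlinarith [Real.sq_sqrt (show 0 ≤ ∑ i ∈ Ω, ⟪x - x', f i⟫ ^ 2 by positivity),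
        Real.sqrt_nonneg (∑ i ∈ Ω, ⟪x - x', f i⟫ ^ 2)]
    have h2 : lowerFrameBound f Ωᶜ ^ 2 * ‖x + x'‖ ^ 2 ≤ ∑ i ∈ Ωᶜ, ⟪x + x', f i⟫ ^ 2 := by
      have ht := lfb_le f Ωᶜ (x + x')
      have hnn : 0 ≤ lowerFrameBound f Ωᶜ * ‖x + x'‖ :=
        mul_nonneg (lfb_nonneg f Ωᶜ) (norm_nonneg _)
      nlinarith [Real.sq_sqrt (show 0 ≤ ∑ i ∈ Ωᶜ, ⟪x + x', f i⟫ ^ 2 by positivity),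
        Real.sqrt_nonneg (∑ i ∈ Ωᶜ, ⟪x + x', f i⟫ ^ 2)]
    have hsq1 : sdist x x' ^ 2 ≤ ‖x - x'‖ ^ 2 := by nlinarith
    have hsq2 : sdist x x' ^ 2 ≤ ‖x + x'‖ ^ 2 := by nlinarith
    have h3 : (lowerFrameBound f Ω ^ 2 + lowerFrameBound f Ωᶜ ^ 2) * sdist x x' ^ 2
        ≤ ∑ i, (|⟪x, f i⟫| - |⟪x', f i⟫|) ^ 2 := by
      rw [hsplit]
      nlinarith [sq_nonneg (lowerFrameBound f Ω), sq_nonneg (lowerFrameBound f Ωᶜ)]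
    have h4 : Real.sqrt (lowerFrameBound f Ω ^ 2 + lowerFrameBound f Ωᶜ ^ 2) * sdist x x'
        ≤ Real.sqrt (∑ i, (|⟪x, f i⟫| - |⟪x', f i⟫|) ^ 2) := by
      have := Real.sqrt_le_sqrt h3
      rwa [Real.sqrt_mul (by positivity), Real.sqrt_sq hdnn] at this
    refine le_trans (mul_le_mul_of_nonneg_right ?_ hdnn) h4
    exact ciInf_le (Set.Finite.bddBelow (Set.finite_range _)) Ω
  · -- upper bound
    have hle1 : ∑ i, (|⟪x, f i⟫| - |⟪x', f i⟫|) ^ 2 ≤ ∑ i, ⟪x - x', f i⟫ ^ 2 :=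
      Finset.sum_le_sum fun i _ => by rw [key_min, hsub i]; exact min_le_left _ _
    have hle2 : ∑ i, (|⟪x, f i⟫| - |⟪x', f i⟫|) ^ 2 ≤ ∑ i, ⟪x + x', f i⟫ ^ 2 :=
      Finset.sum_le_sum fun i _ => by rw [key_min, hadd i]; exact min_le_right _ _
    have e1 : Real.sqrt (∑ i, (|⟪x, f i⟫| - |⟪x', f i⟫|) ^ 2)
        ≤ upperFrameBound f * ‖x - x'‖ :=
      (Real.sqrt_le_sqrt hle1).trans (ufb_ge f (x - x'))
    have e2 : Real.sqrt (∑ i, (|⟪x, f i⟫| - |⟪x', f i⟫|) ^ 2)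
        ≤ upperFrameBound f * ‖x + x'‖ :=
      (Real.sqrt_le_sqrt hle2).trans (ufb_ge f (x + x'))
    have : Real.sqrt (∑ i, (|⟪x, f i⟫| - |⟪x', f i⟫|) ^ 2)
        ≤ min (upperFrameBound f * ‖x - x'‖) (upperFrameBound f * ‖x + x'‖) := le_min e1 e2
    simp only [sdist]
    rwa [← mul_min_of_nonneg _ _ (ufb_nonneg f)] at this
end
end

section
/- Let f : Fin M → ℝ^N and let Mod(x) = (|⟨x, f_i⟩|)_{i=1}^M. The map Mod is injective modulo global sign change (i.e., Mod(x) = Mod(x') implies x = x' or x = −x') if and only if for every subset Ω ⊆ Fin M, either the family {f_i : i ∈ Ω} spans ℝ^N or the family {f_i : i ∈ Ωᶜ} spans ℝ^N (equivalently, either λ₋(F_Ω) > 0 or λ₋(F_{Ωᶜ}) > 0). -/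
open scoped BigOperators RealInnerProductSpace
open Finset

noncomputable section

lemma eq_zero_of_span_top {N M : ℕ} {f : Fin M → EuclideanSpace ℝ (Fin N)}
    {S : Set (Fin M)} (h : Submodule.span ℝ (f '' S) = ⊤)
    {y : EuclideanSpace ℝ (Fin N)} (hy : ∀ i ∈ S, ⟪y, f i⟫ = 0) : y = 0 := by
  have hmem : y ∈ (Submodule.span ℝ (f '' S))ᗮ := by
    rw [Submodule.mem_orthogonal]
    intro u hu
    induction hu using Submodule.span_induction with
    | mem u hu =>
      obtain ⟨i, hi, rfl⟩ := hu
      rw [real_inner_comm]; exact hy i hi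
    | zero => simp
    | add u v _ _ hu hv => rw [inner_add_left, hu, hv]; ring
    | smul c u _ hu => rw [inner_smul_left, hu]; simp
  rw [h, Submodule.top_orthogonal_eq_bot] at hmem
  simpa using hmem

/-- the phaseless map `x ↦ (|⟨x, f_i⟩|)_i` is injective modulo global sign
if and only if for every subset `Ω`, either `{f_i : i ∈ Ω}` or `{f_i : i ∈ Ωᶜ}`
spans `ℝ^N`. -/
theorem phaseless_injective_iff {N M : ℕ} (f : Fin M → EuclideanSpace ℝ (Fin N)) :
    (∀ x x' : EuclideanSpace ℝ (Fin N),
        (∀ i, |⟪x, f i⟫| = |⟪x', f i⟫|) → x = x' ∨ x = -x') ↔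
    (∀ Ω : Set (Fin M),
        Submodule.span ℝ (f '' Ω) = ⊤ ∨ Submodule.span ℝ (f '' Ωᶜ) = ⊤) := by
  constructor
  · intro hinj Ω
    by_contra hcon
    push_neg at hcon
    obtain ⟨h1, h2⟩ := hcon
    -- get nonzero orthogonal vectors
    have hu : ∃ u : EuclideanSpace ℝ (Fin N),
        u ≠ 0 ∧ ∀ i ∈ Ω, ⟪u, f i⟫ = 0 := by
      have : (Submodule.span ℝ (f '' Ω))ᗮ ≠ ⊥ := by
        intro hbot
        exact h1 (Submodule.orthogonal_eq_bot_iff.mp hbot)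
      obtain ⟨u, hu, hu0⟩ := Submodule.exists_mem_ne_zero_of_ne_bot this
      refine ⟨u, hu0, fun i hi => ?_⟩
      rw [real_inner_comm]
      exact (Submodule.mem_orthogonal _ u).mp hu (f i)
        (Submodule.subset_span ⟨i, hi, rfl⟩)
    have hv : ∃ v : EuclideanSpace ℝ (Fin N),
        v ≠ 0 ∧ ∀ i ∈ Ωᶜ, ⟪v, f i⟫ = 0 := by
      have : (Submodule.span ℝ (f '' Ωᶜ))ᗮ ≠ ⊥ := by
        intro hbot
        exact h2 (Submodule.orthogonal_eq_bot_iff.mp hbot)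
      obtain ⟨v, hv, hv0⟩ := Submodule.exists_mem_ne_zero_of_ne_bot this
      refine ⟨v, hv0, fun i hi => ?_⟩
      rw [real_inner_comm]
      exact (Submodule.mem_orthogonal _ v).mp hv (f i)
        (Submodule.subset_span ⟨i, hi, rfl⟩)
    obtain ⟨u, hu0, hu⟩ := hu
    obtain ⟨v, hv0, hv⟩ := hv
    have habs : ∀ i, |⟪u + v, f i⟫| = |⟪u - v, f i⟫| := by
      intro i
      by_cases hi : i ∈ Ω
      · rw [inner_add_left, inner_sub_left, hu i hi]
        simp [abs_neg]
      · rw [inner_add_left, inner_sub_left, hv i hi]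
        simp
    rcases hinj (u + v) (u - v) habs with h | h
    · apply hv0
      have hvv : v = -v := by rwa [sub_eq_add_neg, add_right_inj] at h
      have : v + v = 0 := by nth_rewrite 2 [hvv]; simp
      have h2 : (2 : ℝ) • v = 0 := by
        rw [two_smul]; exact this
      simpa using h2
    · apply hu0
      have huu : u = -u := by
        have h' : u + v = -u + v := by
          rw [h]; abel
        rwa [add_left_inj] at h'
      have : u + u = 0 := by nth_rewrite 2 [huu]; simp
      have h2 : (2 : ℝ) • u = 0 := by
        rw [two_smul]; exact this
      simpa using h2
  · intro hspan x x' habs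
    set Ω : Set (Fin M) := {i | ⟪x + x', f i⟫ = 0} with hΩ
    have hcomp : ∀ i ∈ Ωᶜ, ⟪x - x', f i⟫ = 0 := by
      intro i hi
      rcases abs_eq_abs.mp (habs i) with h | h
      · rw [inner_sub_left, h]; ring
      · exfalso
        apply hi
        show ⟪x + x', f i⟫ = 0
        rw [inner_add_left, h]; ring
    rcases hspan Ω with h | h
    · right
      have : x + x' = 0 := eq_zero_of_span_top h (fun i hi => hi)
      exact eq_neg_of_add_eq_zero_left this
    · left
      have : x - x' = 0 := eq_zero_of_span_top h hcomp
      exact sub_eq_zero.mp this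
end
end

section
/- For any two vectors u, v ∈ ℝ^L (L ≥ 2) there exists an orthogonal L×L matrix U such that (Uu)_j = 0 and (Uv)_j = 0 for all j > 2, and (‖u‖₂ − ‖v‖₂)² = (|(Uu)_1| − |(Uv)_1|)² + (|(Uu)_2| − |(Uv)_2|)². (This is the 'bisecting rotation' used in the proof of the ℓ² pooling lower Lipschitz bound: after rotating u and v into a common two-dimensional coordinate plane and bisecting the angle between them, the difference of their norms equals the Euclidean distance between the entrywise absolute values of their first two coordinates.) -/
open scoped BigOperators
open Matrix

noncomputable section

open Module
open scoped RealInnerProductSpace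

lemma exists_snd {L : ℕ} (hL : 2 ≤ L) (w0 : EuclideanSpace ℝ (Fin L)) (h : ‖w0‖ = 1) :
    ∃ w : Fin 2 → EuclideanSpace ℝ (Fin L), Orthonormal ℝ w ∧ w 0 = w0 := by
  have hw0 : w0 ≠ 0 := by intro h0; rw [h0] at h; simp at h
  set K : Submodule ℝ (EuclideanSpace ℝ (Fin L)) := ℝ ∙ w0 with hK
  have hKtop : K ≠ ⊤ := by
    intro htop
    have h1 : finrank ℝ K = 1 := finrank_span_singleton hw0
    have h2 : finrank ℝ (EuclideanSpace ℝ (Fin L)) = L := finrank_euclideanSpace_fin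
    rw [htop, finrank_top] at h1
    omega
  have hbot : Kᗮ ≠ ⊥ := by
    simp only [ne_eq, Submodule.orthogonal_eq_bot_iff]
    exact hKtop
  obtain ⟨x, hxK, hx0⟩ := Submodule.exists_mem_ne_zero_of_ne_bot hbot
  have hxn : ‖x‖ ≠ 0 := norm_ne_zero_iff.mpr hx0
  refine ⟨![w0, ‖x‖⁻¹ • x], ?_, rfl⟩
  have hinner : ⟪w0, x⟫ = 0 := hxK w0 (Submodule.mem_span_singleton_self w0)
  have h00 : ⟪w0, w0⟫ = 1 := by rw [real_inner_self_eq_norm_sq, h]; norm_num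
  have h01 : ⟪w0, (‖x‖⁻¹ • x : EuclideanSpace ℝ (Fin L))⟫ = 0 := by
    rw [real_inner_smul_right, hinner, mul_zero]
  have h10 : ⟪(‖x‖⁻¹ • x : EuclideanSpace ℝ (Fin L)), w0⟫ = 0 := by
    rw [real_inner_comm]; exact h01
  have h11 : ⟪(‖x‖⁻¹ • x : EuclideanSpace ℝ (Fin L)), ‖x‖⁻¹ • x⟫ = 1 := by
    rw [real_inner_self_eq_norm_sq, norm_smul, norm_inv, norm_norm, inv_mul_cancel₀ hxn]
    norm_num
  rw [orthonormal_iff_ite]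
  intro i j
  fin_cases i <;> fin_cases j <;>
    simp only [Matrix.cons_val_zero, Matrix.cons_val_one, Matrix.head_cons, Fin.mk_zero,
      Fin.mk_one] <;>
    first
      | (rw [if_pos trivial]; first | exact h00 | exact h11)
      | (rw [if_neg (by decide)]; first | exact h01 | exact h10)


lemma exists_pair {L : ℕ} (hL : 2 ≤ L) (u v : EuclideanSpace ℝ (Fin L)) :
    ∃ (w : Fin 2 → EuclideanSpace ℝ (Fin L)) (a b : Fin 2 → ℝ),
      Orthonormal ℝ w ∧ u = a 0 • w 0 + a 1 • w 1 ∧ v = b 0 • w 0 + b 1 • w 1 ∧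
      (‖u‖ - ‖v‖) ^ 2 = (|a 0| - |b 0|) ^ 2 + (|a 1| - |b 1|) ^ 2 := by
  by_cases hu : u = 0
  · by_cases hv : v = 0
    · -- both zero
      obtain ⟨w, hw, -⟩ := exists_snd hL (EuclideanSpace.single (⟨0, by omega⟩ : Fin L) 1)
        (by simp)
      exact ⟨w, ![0,0], ![0,0], hw, by simp [hu], by simp [hv], by simp [hu, hv]⟩
    · -- u = 0, v ≠ 0
      have hvn : ‖v‖ ≠ 0 := norm_ne_zero_iff.mpr hv
      obtain ⟨w, hw, hw0⟩ := exists_snd hL (‖v‖⁻¹ • v)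
        (by rw [norm_smul, norm_inv, norm_norm, inv_mul_cancel₀ hvn])
      refine ⟨w, ![0,0], ![‖v‖,0], hw, by simp [hu], ?_, ?_⟩
      · rw [hw0]; simp [smul_smul, mul_inv_cancel₀ hvn]
      · simp [hu, abs_of_nonneg (norm_nonneg v)]
  · by_cases hv : v = 0
    · -- v = 0, u ≠ 0
      have hun : ‖u‖ ≠ 0 := norm_ne_zero_iff.mpr hu
      obtain ⟨w, hw, hw0⟩ := exists_snd hL (‖u‖⁻¹ • u)
        (by rw [norm_smul, norm_inv, norm_norm, inv_mul_cancel₀ hun])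
      refine ⟨w, ![‖u‖,0], ![0,0], hw, ?_, by simp [hv], ?_⟩
      · rw [hw0]; simp [smul_smul, mul_inv_cancel₀ hun]
      · simp [hv, abs_of_nonneg (norm_nonneg u)]
    · -- main case
      have hun : ‖u‖ ≠ 0 := norm_ne_zero_iff.mpr hu
      have hvn : ‖v‖ ≠ 0 := norm_ne_zero_iff.mpr hv
      set uh : EuclideanSpace ℝ (Fin L) := ‖u‖⁻¹ • u with huh
      set vh : EuclideanSpace ℝ (Fin L) := ‖v‖⁻¹ • v with hvh
      have huh1 : ‖uh‖ = 1 := by rw [huh, norm_smul, norm_inv, norm_norm, inv_mul_cancel₀ hun]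
      have hvh1 : ‖vh‖ = 1 := by rw [hvh, norm_smul, norm_inv, norm_norm, inv_mul_cancel₀ hvn]
      have huu : u = ‖u‖ • uh := by rw [huh, smul_smul, mul_inv_cancel₀ hun, one_smul]
      have hvv : v = ‖v‖ • vh := by rw [hvh, smul_smul, mul_inv_cancel₀ hvn, one_smul]
      by_cases hp : uh + vh = 0
      · -- vh = -uh
        obtain ⟨w, hw, hw0⟩ := exists_snd hL uh huh1
        have hvuh : vh = -uh := by linear_combination (norm := module) hp
        refine ⟨w, ![‖u‖,0], ![-‖v‖,0], hw, ?_, ?_, ?_⟩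
        · rw [hw0]; simpa using huu
        · rw [hw0]; simp only [Matrix.cons_val_zero, Matrix.cons_val_one, Matrix.head_cons]
          nth_rewrite 1 [hvv]; rw [hvuh]; module
        · simp [abs_of_nonneg (norm_nonneg u), abs_of_nonneg (norm_nonneg v)]
      · by_cases hm : uh - vh = 0
        · -- vh = uh
          obtain ⟨w, hw, hw0⟩ := exists_snd hL uh huh1
          have hvuh : vh = uh := by linear_combination (norm := module) -hm
          refine ⟨w, ![‖u‖,0], ![‖v‖,0], hw, ?_, ?_, ?_⟩
          · rw [hw0]; simpa using huu
          · rw [hw0]; simp only [Matrix.cons_val_zero, Matrix.cons_val_one, Matrix.head_cons]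
            nth_rewrite 1 [hvv]; rw [hvuh]; module
          · simp [abs_of_nonneg (norm_nonneg u), abs_of_nonneg (norm_nonneg v)]
        · -- generic case
          set p : EuclideanSpace ℝ (Fin L) := uh + vh with hpd
          set m : EuclideanSpace ℝ (Fin L) := uh - vh with hmd
          have hpn : ‖p‖ ≠ 0 := norm_ne_zero_iff.mpr hp
          have hmn : ‖m‖ ≠ 0 := norm_ne_zero_iff.mpr hm
          have hpm : ⟪p, m⟫ = 0 := by
            rw [hpd, hmd, inner_sub_right, inner_add_left, inner_add_left,
              real_inner_comm vh uh]
            have h1 : ⟪uh, uh⟫ = 1 := by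
              rw [real_inner_self_eq_norm_sq, huh1]; norm_num
            have h2 : ⟪vh, vh⟫ = 1 := by
              rw [real_inner_self_eq_norm_sq, hvh1]; norm_num
            rw [h1, h2]; ring
          set w0 : EuclideanSpace ℝ (Fin L) := ‖p‖⁻¹ • p with hw0d
          set w1 : EuclideanSpace ℝ (Fin L) := ‖m‖⁻¹ • m with hw1d
          have hworth : Orthonormal ℝ ![w0, w1] := by
            rw [orthonormal_iff_ite]
            intro i j
            have e00 : ⟪w0, w0⟫ = 1 := by
              rw [real_inner_self_eq_norm_sq, hw0d, norm_smul, norm_inv, norm_norm,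
                inv_mul_cancel₀ hpn]; norm_num
            have e11 : ⟪w1, w1⟫ = 1 := by
              rw [real_inner_self_eq_norm_sq, hw1d, norm_smul, norm_inv, norm_norm,
                inv_mul_cancel₀ hmn]; norm_num
            have e01 : ⟪w0, w1⟫ = 0 := by
              rw [hw0d, hw1d, real_inner_smul_left, real_inner_smul_right, hpm]; ring
            have e10 : ⟪w1, w0⟫ = 0 := by rw [real_inner_comm]; exact e01
            fin_cases i <;> fin_cases j <;>
              simp only [Matrix.cons_val_zero, Matrix.cons_val_one, Matrix.head_cons,
                Fin.mk_zero, Fin.mk_one] <;>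
              first
                | (rw [if_pos trivial]; first | exact e00 | exact e11)
                | (rw [if_neg (by decide)]; first | exact e01 | exact e10)
          refine ⟨![w0, w1], ![‖u‖ * (‖p‖/2), ‖u‖ * (‖m‖/2)],
            ![‖v‖ * (‖p‖/2), -(‖v‖ * (‖m‖/2))], hworth, ?_, ?_, ?_⟩
          · simp only [Matrix.cons_val_zero, Matrix.cons_val_one, Matrix.head_cons]
            rw [hw0d, hw1d, smul_smul, smul_smul]
            have c1 : ‖u‖ * (‖p‖/2) * ‖p‖⁻¹ = ‖u‖/2 := by field_simp
            have c2 : ‖u‖ * (‖m‖/2) * ‖m‖⁻¹ = ‖u‖/2 := by field_simp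
            rw [c1, c2, hpd, hmd]
            nth_rewrite 1 [huu]; module
          · simp only [Matrix.cons_val_zero, Matrix.cons_val_one, Matrix.head_cons]
            rw [hw0d, hw1d, smul_smul, smul_smul]
            have c1 : ‖v‖ * (‖p‖/2) * ‖p‖⁻¹ = ‖v‖/2 := by field_simp
            have c2 : -(‖v‖ * (‖m‖/2)) * ‖m‖⁻¹ = -(‖v‖/2) := by field_simp
            rw [c1, c2, hpd, hmd]
            nth_rewrite 1 [hvv]; module
          · simp only [Matrix.cons_val_zero, Matrix.cons_val_one, Matrix.head_cons]
            have hcs : (‖p‖/2)^2 + (‖m‖/2)^2 = 1 := by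
              have h1 : ‖p‖^2 = 2 + 2 * ⟪uh, vh⟫ := by
                rw [hpd, norm_add_sq_real, huh1, hvh1]; ring
              have h2 : ‖m‖^2 = 2 - 2 * ⟪uh, vh⟫ := by
                rw [hmd, norm_sub_sq_real, huh1, hvh1]; ring
              linear_combination h1/4 + h2/4
            have a0 : |‖u‖ * (‖p‖/2)| = ‖u‖ * (‖p‖/2) := abs_of_nonneg (by positivity)
            have a1 : |‖u‖ * (‖m‖/2)| = ‖u‖ * (‖m‖/2) := abs_of_nonneg (by positivity)
            have b0 : |‖v‖ * (‖p‖/2)| = ‖v‖ * (‖p‖/2) := abs_of_nonneg (by positivity)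
            have b1 : |-(‖v‖ * (‖m‖/2))| = ‖v‖ * (‖m‖/2) := by
              rw [abs_neg]; exact abs_of_nonneg (by positivity)
            rw [a0, a1, b0, b1]
            linear_combination (-((‖u‖ - ‖v‖)^2)) * hcs

/-- for any `u, v ∈ ℝ^L` (`L ≥ 2`) there is an orthogonal matrix `U`
mapping both into the first two coordinates and bisecting them, so that
`(‖u‖ − ‖v‖)² = (|(Uu)₁| − |(Uv)₁|)² + (|(Uu)₂| − |(Uv)₂|)²`. -/
theorem bisecting_rotation {L : ℕ} (hL : 2 ≤ L) (u v : EuclideanSpace ℝ (Fin L)) :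
    ∃ U : Matrix (Fin L) (Fin L) ℝ, Uᵀ * U = 1 ∧
      (∀ j : Fin L, 2 ≤ (j : ℕ) → U.mulVec u j = 0 ∧ U.mulVec v j = 0) ∧
      (‖u‖ - ‖v‖) ^ 2 =
        (|U.mulVec u ⟨0, by omega⟩| - |U.mulVec v ⟨0, by omega⟩|) ^ 2 +
        (|U.mulVec u ⟨1, by omega⟩| - |U.mulVec v ⟨1, by omega⟩|) ^ 2 := by
  obtain ⟨w, a, b, hw, hu, hv, hid⟩ := exists_pair hL u v
  have h0L : 0 < L := by omega
  have h1L : 1 < L := by omega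
  set i0 : Fin L := ⟨0, h0L⟩ with hi0
  set i1 : Fin L := ⟨1, h1L⟩ with hi1
  have hi01 : i0 ≠ i1 := by simp [hi0, hi1, Fin.ext_iff]
  set v' : Fin L → EuclideanSpace ℝ (Fin L) :=
    fun i => if (i : ℕ) = 0 then w 0 else w 1 with hv'
  have hcard : finrank ℝ (EuclideanSpace ℝ (Fin L)) = Fintype.card (Fin L) := by simp
  have hwij := orthonormal_iff_ite.mp hw
  have hres : Orthonormal ℝ (({i0, i1} : Set (Fin L)).restrict v') := by
    rw [orthonormal_iff_ite]
    rintro ⟨i, hi⟩ ⟨j, hj⟩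
    simp only [Set.mem_insert_iff, Set.mem_singleton_iff] at hi hj
    rcases hi with rfl | rfl <;> rcases hj with rfl | rfl <;>
      simp only [Set.restrict_apply, hv', hi0, hi1] <;> norm_num <;>
      [skip; skip; skip; skip]
    · have := hwij 0 0; show ‖w 0‖ = 1 ∨ ‖w 0‖ = -1; simpa using this
    · have h := hwij 0 1; simp at h; exact h
    · have h := hwij 1 0; simp at h; exact h
    · have := hwij 1 1; show ‖w 1‖ = 1 ∨ ‖w 1‖ = -1; simpa using this
  obtain ⟨B, hB⟩ := hres.exists_orthonormalBasis_extension_of_card_eq hcard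
  have hB0 : B i0 = w 0 := by
    have := hB i0 (by simp)
    simpa [hv', hi0] using this
  have hB1 : B i1 = w 1 := by
    have := hB i1 (by simp)
    simpa [hv', hi1] using this
  have hBij := orthonormal_iff_ite.mp B.orthonormal
  set U : Matrix (Fin L) (Fin L) ℝ := fun i j => B i j with hU
  have hinner : ∀ (x y : EuclideanSpace ℝ (Fin L)), ⟪x, y⟫ = ∑ k, x k * y k := by
    intro x y; simp [PiLp.inner_apply, RCLike.inner_apply, conj_trivial]
    exact Finset.sum_congr rfl (fun _ _ => mul_comm _ _)
  have hmv : ∀ (x : EuclideanSpace ℝ (Fin L)) (j : Fin L), U.mulVec x j = ⟪B j, x⟫ := by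
    intro x j
    rw [hinner]
    simp [hU, Matrix.mulVec, dotProduct]
  have hUUT : U * Uᵀ = 1 := by
    ext i k
    rw [Matrix.mul_apply, Matrix.one_apply]
    have h := hBij i k
    rw [hinner] at h
    exact h
  have hcoord : ∀ (x : EuclideanSpace ℝ (Fin L)) (c d : ℝ) (j : Fin L),
      x = c • w 0 + d • w 1 →
      U.mulVec x j = c * (if j = i0 then 1 else 0) + d * (if j = i1 then 1 else 0) := by
    intro x c d j hx
    rw [hmv, hx, inner_add_right, real_inner_smul_right, real_inner_smul_right,
      ← hB0, ← hB1, hBij j i0, hBij j i1]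
  refine ⟨U, mul_eq_one_comm.mp hUUT, ?_, ?_⟩
  · intro j hj
    have hjv0 : (j : ℕ) ≠ 0 := by omega
    have hjv1 : (j : ℕ) ≠ 1 := by omega
    have hj0 : j ≠ i0 := fun h => hjv0 (by rw [h])
    have hj1 : j ≠ i1 := fun h => hjv1 (by rw [h])
    constructor
    · rw [hcoord u (a 0) (a 1) j hu, if_neg hj0, if_neg hj1]; ring
    · rw [hcoord v (b 0) (b 1) j hv, if_neg hj0, if_neg hj1]; ring
  · have e0u : U.mulVec u i0 = a 0 := by
      rw [hcoord u (a 0) (a 1) i0 hu, if_pos rfl, if_neg hi01]; ring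
    have e1u : U.mulVec u i1 = a 1 := by
      rw [hcoord u (a 0) (a 1) i1 hu, if_neg (Ne.symm hi01), if_pos rfl]; ring
    have e0v : U.mulVec v i0 = b 0 := by
      rw [hcoord v (b 0) (b 1) i0 hv, if_pos rfl, if_neg hi01]; ring
    have e1v : U.mulVec v i1 = b 1 := by
      rw [hcoord v (b 0) (b 1) i1 hv, if_neg (Ne.symm hi01), if_pos rfl]; ring
    rw [e0u, e1u, e0v, e1v]
    exact hid
end
end

section
/- Let f : Fin M → ℝ^N, let I ⊆ Fin M be a finite index set (a pool), and let x ∈ ℝ^N. Then the ℓ¹ pool value equals a max-pool over the sign-expanded family: ∑_{j∈I} |⟨x, f_j⟩| = max over sign patterns ε : I → {−1, 1} of |⟨x, ∑_{j∈I} ε_j · f_j⟩|. Consequently, the ℓ¹ pooling operator P₁ associated with a pooled frame coincides with the max-pooling operator P_∞ associated with the frame whose pool k consists of the 2^L vectors ∑_{j∈I_k} ε_j f_j, ε ∈ {−1,1}^{I_k}. -/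
open scoped BigOperators RealInnerProductSpace
open Finset

noncomputable section

lemma aux_isGreatest {N M : ℕ} (f : Fin M → EuclideanSpace ℝ (Fin N))
    (I : Finset (Fin M)) (x : EuclideanSpace ℝ (Fin N)) :
    IsGreatest {r : ℝ | ∃ ε : Fin M → ℝ, (∀ j, ε j = 1 ∨ ε j = -1) ∧
        r = |⟪x, ∑ j ∈ I, ε j • f j⟫|}
      (∑ j ∈ I, |⟪x, f j⟫|) := by
  constructor
  · refine ⟨fun j => if 0 ≤ ⟪x, f j⟫ then 1 else -1, fun j => by dsimp only; split <;> simp, ?_⟩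
    rw [inner_sum]
    have : ∀ j ∈ I, ⟪x, (if 0 ≤ ⟪x, f j⟫ then (1:ℝ) else -1) • f j⟫ = |⟪x, f j⟫| := by
      intro j _
      rw [real_inner_smul_right]
      split <;> rename_i h
      · rw [one_mul, abs_of_nonneg h]
      · rw [abs_of_neg (lt_of_not_ge h)]; ring
    rw [Finset.sum_congr rfl this, abs_of_nonneg (Finset.sum_nonneg fun j _ => abs_nonneg _)]
  · rintro r ⟨ε, hε, rfl⟩
    rw [inner_sum]
    calc |∑ j ∈ I, ⟪x, ε j • f j⟫| ≤ ∑ j ∈ I, |⟪x, ε j • f j⟫| :=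
          Finset.abs_sum_le_sum_abs _ _
      _ = ∑ j ∈ I, |⟪x, f j⟫| := by
          refine Finset.sum_congr rfl fun j _ => ?_
          rw [real_inner_smul_right, abs_mul]
          rcases hε j with h | h <;> simp [h]

/-- the ℓ¹ pool value equals a max-pool over the sign-expanded family:
`∑_{j∈I} |⟨x, f_j⟩|` is the greatest value of `|⟨x, ∑_{j∈I} ε_j f_j⟩|` over sign
patterns `ε : I → {−1,1}`; consequently ℓ¹ pooling coincides with max-pooling over the
sign-expanded frame. -/
theorem l1_pool_eq_signExpanded_maxPool {N M : ℕ} (f : Fin M → EuclideanSpace ℝ (Fin N))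
    (I : Finset (Fin M)) (x : EuclideanSpace ℝ (Fin N)) :
    IsGreatest {r : ℝ | ∃ ε : Fin M → ℝ, (∀ j, ε j = 1 ∨ ε j = -1) ∧
        r = |⟪x, ∑ j ∈ I, ε j • f j⟫|}
      (∑ j ∈ I, |⟪x, f j⟫|) ∧
    ∀ (K : ℕ) (Is : Fin K → Finset (Fin M)) (k : Fin K),
      (∑ j ∈ Is k, |⟪x, f j⟫|) =
        sSup {r : ℝ | ∃ ε : Fin M → ℝ, (∀ j, ε j = 1 ∨ ε j = -1) ∧
          r = |⟪x, ∑ j ∈ Is k, ε j • f j⟫|} := by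
  exact ⟨aux_isGreatest f I x, fun K Is k => (aux_isGreatest f (Is k) x).csSup_eq.symm⟩
end
end
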